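/- Let A be a real m×n matrix. Let S_c be a real m×l matrix whose column space contains the column space of A, and let S_r be a real n×l' matrix whose column space contains the column space of Aᵗ. Suppose J_c is a list of row indices of S_c and X_c is a real matrix with S_c = X_c · S_c(J_c,:), and suppose J_r is a list of row indices of S_r and X_r is a real matrix with S_r = X_r · S_r(J_r,:). Then A = X_c · A(J_c, J_r) · X_rᵗ, where A(J_c, J_r) is the submatrix of A with rows indexed by J_c and columns indexed by J_r. (Thus the middle factor of the factorization is obtained by simply extracting a submatrix of A.) -/

import Mathlib

open Matrix

private lemma exists_fac {m n l : ℕ} (A : Matrix (Fin m) (Fin n) ℝ)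
    (S : Matrix (Fin m) (Fin l) ℝ)
    (h : LinearMap.range (Matrix.mulVecLin A) ≤ LinearMap.range (Matrix.mulVecLin S)) :
    ∃ Y : Matrix (Fin l) (Fin n) ℝ, A = S * Y := by
  have hcol : ∀ j : Fin n, ∃ y : Fin l → ℝ, S.mulVec y = A.mulVec (Pi.single j 1) := by
    intro j
    have : A.mulVec (Pi.single j 1) ∈ LinearMap.range (Matrix.mulVecLin S) := by
      apply h
      exact ⟨Pi.single j 1, rfl⟩
    obtain ⟨y, hy⟩ := this
    exact ⟨y, hy⟩
  choose Y hY using hcol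
  refine ⟨Matrix.of fun k j => Y j k, ?_⟩
  ext i j
  have h1 := congrFun (hY j) i
  simp only [Matrix.mulVec_single, mul_one] at h1
  rw [Matrix.mul_apply]
  rw [show A i j = (S *ᵥ Y j) i by simp [h1]]
  simp [Matrix.mulVec, dotProduct]

private lemma row_fac {m n l jc : ℕ} (A : Matrix (Fin m) (Fin n) ℝ)
    (S : Matrix (Fin m) (Fin l) ℝ)
    (h : LinearMap.range (Matrix.mulVecLin A) ≤ LinearMap.range (Matrix.mulVecLin S))
    (J : Fin jc → Fin m) (X : Matrix (Fin m) (Fin jc) ℝ)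
    (hS : S = X * S.submatrix J id) :
    A = X * A.submatrix J id := by
  obtain ⟨Y, hY⟩ := exists_fac A S h
  have hsub : A.submatrix J id = S.submatrix J id * Y := by
    rw [hY]
    ext i j
    simp [Matrix.mul_apply, Matrix.submatrix_apply]
  rw [hsub, hY, ← Matrix.mul_assoc, ← hS]

theorem stmt_6 (m n l l' jc jr : ℕ)
    (A : Matrix (Fin m) (Fin n) ℝ)
    (Sc : Matrix (Fin m) (Fin l) ℝ) (Sr : Matrix (Fin n) (Fin l') ℝ)
    (hc_span : LinearMap.range (Matrix.mulVecLin A) ≤ LinearMap.range (Matrix.mulVecLin Sc))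
    (hr_span : LinearMap.range (Matrix.mulVecLin Aᵀ) ≤ LinearMap.range (Matrix.mulVecLin Sr))
    (Jc : Fin jc → Fin m) (Xc : Matrix (Fin m) (Fin jc) ℝ)
    (hSc : Sc = Xc * Sc.submatrix Jc id)
    (Jr : Fin jr → Fin n) (Xr : Matrix (Fin n) (Fin jr) ℝ)
    (hSr : Sr = Xr * Sr.submatrix Jr id) :
    A = Xc * A.submatrix Jc Jr * Xrᵀ := by
  have h1 : A = Xc * A.submatrix Jc id := row_fac A Sc hc_span Jc Xc hSc
  have h2 : Aᵀ = Xr * Aᵀ.submatrix Jr id := row_fac Aᵀ Sr hr_span Jr Xr hSr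
  have h3 : A = A.submatrix id Jr * Xrᵀ := by
    have := congrArg Matrix.transpose h2
    simpa [Matrix.transpose_mul] using this
  calc A = Xc * A.submatrix Jc id := h1
    _ = Xc * (A.submatrix id Jr * Xrᵀ).submatrix Jc id := by rw [← h3]
    _ = Xc * A.submatrix Jc Jr * Xrᵀ := by
        rw [Matrix.mul_assoc]
        congr 1
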